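/- If D is a mixing coherent set of desirable options, then for any interior point o of the positive cone, the functional u_o(x) := sup{α ∈ ℝ : x - αo ∈ D} is linear (additive and homogeneous). -/

import Mathlib

/-- The set of all positive linear combinations of elements of `S`. -/
def Posi {V : Type*} [AddCommGroup V] [Module ℝ V] (S : Set V) : Set V :=
  {x | ∃ (n : ℕ) (c : Fin n → ℝ) (v : Fin n → V),
    0 < n ∧ (∀ i, 0 < c i) ∧ (∀ i, v i ∈ S) ∧ x = ∑ i, c i • v i}

/-- A set of desirable options is mixing if whenever some positive linear combination of a
finite option set is desirable, some element of the option set is desirable. -/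
def MixingSet {V : Type*} [AddCommGroup V] [Module ℝ V] (D : Set V) : Prop :=
  ∀ A : Finset V, (Posi (A : Set V) ∩ D).Nonempty → ∃ a ∈ A, a ∈ D

theorem stmt12 {V : Type*} [NormedAddCommGroup V] [NormedSpace ℝ V] [CompleteSpace V]
    (gt : V → V → Prop)
    (hirr : ∀ x : V, ¬ gt x x)
    (htrans : ∀ x y z : V, gt x y → gt y z → gt x z)
    (haddc : ∀ x y z : V, gt x y → gt (x + z) (y + z))
    (hsmulc : ∀ (x y : V) (c : ℝ), 0 < c → gt x y → gt (c • x) (c • y))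
    (D : Set V)
    (hD0 : (0 : V) ∉ D)
    (hDcone : ∀ x ∈ D, ∀ y ∈ D, ∀ l m : ℝ, 0 ≤ l → 0 ≤ m → 0 < l + m → l • x + m • y ∈ D)
    (hDpos : {x : V | gt x 0} ⊆ D)
    (hmix : MixingSet D)
    (o : V) (ho : o ∈ interior {x : V | gt x 0}) :
    (∀ x y : V,
      sSup {α : ℝ | (x + y) - α • o ∈ D} =
        sSup {α : ℝ | x - α • o ∈ D} + sSup {α : ℝ | y - α • o ∈ D}) ∧
    (∀ (x : V) (c : ℝ),
      sSup {α : ℝ | (c • x) - α • o ∈ D} = c * sSup {α : ℝ | x - α • o ∈ D}) := by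
  classical
  obtain ⟨ε, hε, hball⟩ : ∃ ε > 0, Metric.ball o ε ⊆ {x : V | gt x 0} := by
    rcases Metric.mem_nhds_iff.1 (mem_interior_iff_mem_nhds.1 ho) with ⟨ε, hε, hb⟩
    exact ⟨ε, hε, hb⟩
  -- positivity of z + t • o for t large
  have hpos : ∀ (z : V) (t : ℝ), 0 < t → ‖z‖ < t * ε → gt (z + t • o) 0 := by
    intro z t ht hz
    have h1 : o + t⁻¹ • z ∈ Metric.ball o ε := by
      rw [Metric.mem_ball, dist_eq_norm]
      have : o + t⁻¹ • z - o = t⁻¹ • z := by abel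
      rw [this, norm_smul, Real.norm_eq_abs, abs_of_pos (inv_pos.2 ht)]
      rw [inv_mul_lt_iff₀ ht]
      linarith [hz]
    have h2 : gt (o + t⁻¹ • z) 0 := hball h1
    have h3 := hsmulc _ 0 t ht h2
    have h4 : t • (o + t⁻¹ • z) = z + t • o := by
      rw [smul_add, smul_inv_smul₀ (ne_of_gt ht)]; abel
    rwa [h4, smul_zero] at h3
  -- membership helpers
  have hDsc : ∀ (c : ℝ), 0 < c → ∀ z ∈ D, c • z ∈ D := by
    intro c hc z hz
    have := hDcone z hz z hz c 0 (le_of_lt hc) le_rfl (by linarith)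
    simpa using this
  -- nonemptiness of the defining sets
  have hne : ∀ x : V, ({α : ℝ | x - α • o ∈ D}).Nonempty := by
    intro x
    refine ⟨-(‖x‖ / ε + 1), ?_⟩
    have ht : (0:ℝ) < ‖x‖ / ε + 1 := by positivity
    have hlt : ‖x‖ < (‖x‖ / ε + 1) * ε := by
      rw [add_mul, div_mul_cancel₀ _ (ne_of_gt hε)]
      nlinarith [norm_nonneg x]
    have h2 := hDpos (hpos x _ ht hlt)
    simp only [Set.mem_setOf_eq, neg_smul, sub_neg_eq_add]
    exact h2
  -- boundedness
  have hub : ∀ (x : V) (α : ℝ), x - α • o ∈ D → α ≤ ‖x‖ / ε := by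
    intro x α hα
    by_contra h
    push_neg at h
    have hαpos : 0 < α := lt_of_le_of_lt (by positivity) h
    have hlt : ‖-x‖ < α * ε := by
      rw [norm_neg]
      rw [div_lt_iff₀ hε] at h
      linarith
    have h2 : -x + α • o ∈ D := hDpos (hpos (-x) α hαpos hlt)
    have h3 := hDcone _ hα _ h2 1 1 zero_le_one zero_le_one (by norm_num)
    simp only [one_smul] at h3
    have : x - α • o + (-x + α • o) = 0 := by abel
    rw [this] at h3
    exact hD0 h3
  have hbdd : ∀ x : V, BddAbove ({α : ℝ | x - α • o ∈ D}) := by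
    intro x
    exact ⟨‖x‖ / ε, fun α hα => hub x α hα⟩
  have hmem_le : ∀ (x : V) (α : ℝ), x - α • o ∈ D → α ≤ sSup {α : ℝ | x - α • o ∈ D} :=
    fun x α hα => le_csSup (hbdd x) hα
  -- additivity of membership
  have haddmem : ∀ (x y : V) (α β : ℝ), x - α • o ∈ D → y - β • o ∈ D →
      (x + y) - (α + β) • o ∈ D := by
    intro x y α β hα hβ
    have h := hDcone _ hα _ hβ 1 1 zero_le_one zero_le_one (by norm_num)
    simp only [one_smul] at h
    have : x - α • o + (y - β • o) = (x + y) - (α + β) • o := by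
      rw [add_smul]; abel
    rwa [this] at h
  -- superadditivity
  have hsuper : ∀ x y : V,
      sSup {α : ℝ | x - α • o ∈ D} + sSup {α : ℝ | y - α • o ∈ D} ≤
        sSup {α : ℝ | (x + y) - α • o ∈ D} := by
    intro x y
    have h1 : sSup {α : ℝ | x - α • o ∈ D} ≤
        sSup {α : ℝ | (x + y) - α • o ∈ D} - sSup {α : ℝ | y - α • o ∈ D} := by
      refine csSup_le (hne x) fun α hα => ?_
      rw [le_sub_iff_add_le, add_comm]
      refine le_sub_iff_add_le.mp (csSup_le (hne y) fun β hβ => ?_)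
      rw [le_sub_iff_add_le, add_comm]
      exact hmem_le _ _ (haddmem x y α β hα hβ)
    linarith
  -- u 0 = 0
  have hsuper0 : sSup {α : ℝ | (0:V) - α • o ∈ D} ≤ 0 := by
    have h := hsuper 0 0
    simp only [add_zero] at h
    linarith
  -- mixing key : 0 ≤ u x + u (-x)
  have hmixkey : ∀ x : V,
      0 ≤ sSup {α : ℝ | x - α • o ∈ D} + sSup {α : ℝ | (-x) - α • o ∈ D} := by
    intro x
    by_contra h
    push_neg at h
    set s := sSup {α : ℝ | x - α • o ∈ D} with hs
    set t := sSup {α : ℝ | (-x) - α • o ∈ D} with hts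
    set δ : ℝ := -(s + t) / 3 with hδ
    have hδpos : 0 < δ := by rw [hδ]; linarith
    set α := s + δ with hα
    set β := t + δ with hβ
    have hsum : α + β = (s + t) / 3 := by rw [hα, hβ, hδ]; ring
    have hsumneg : α + β < 0 := by rw [hsum]; linarith
    -- -(α+β) • o ∈ D
    have hoD : -(α + β) • o ∈ D := by
      have h0 : o ∈ {x : V | gt x 0} := interior_subset ho
      have := hsmulc o 0 (-(α+β)) (by linarith) h0
      rw [smul_zero] at this
      exact hDpos this
    -- set up the mixing application
    have hPosi : -(α + β) • o ∈ Posi (({x - α • o, -x - β • o} : Finset V) : Set V) := by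
      refine ⟨2, fun _ => 1, ![x - α • o, -x - β • o], by norm_num,
        fun i => one_pos, ?_, ?_⟩
      · intro i
        fin_cases i <;> simp
      · rw [Fin.sum_univ_two]
        simp only [Matrix.cons_val_zero, Matrix.cons_val_one, Matrix.head_cons, one_smul]
        rw [neg_smul, add_smul]
        abel
    obtain ⟨a, haA, haD⟩ := hmix _ ⟨_, hPosi, hoD⟩
    simp only [Finset.mem_insert, Finset.mem_singleton] at haA
    rcases haA with rfl | rfl
    · have := hmem_le x α haD
      rw [← hs] at this
      rw [hα] at this
      linarith
    · have := hmem_le (-x) β haD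
      rw [← hts] at this
      rw [hβ] at this
      linarith
  have hu0 : sSup {α : ℝ | (0:V) - α • o ∈ D} = 0 := by
    have h := hmixkey 0
    rw [neg_zero] at h
    linarith
  have hneg : ∀ x : V,
      sSup {α : ℝ | (-x) - α • o ∈ D} = -sSup {α : ℝ | x - α • o ∈ D} := by
    intro x
    have h1 := hsuper x (-x)
    rw [add_neg_cancel, hu0] at h1
    have h2 := hmixkey x
    linarith
  -- additivity
  have hadd : ∀ x y : V,
      sSup {α : ℝ | (x + y) - α • o ∈ D} =
        sSup {α : ℝ | x - α • o ∈ D} + sSup {α : ℝ | y - α • o ∈ D} := by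
    intro x y
    refine le_antisymm ?_ (hsuper x y)
    have h1 := hsuper (x + y) (-y)
    rw [add_neg_cancel_right, hneg y] at h1
    linarith
  refine ⟨hadd, ?_⟩
  -- homogeneity
  have hposhom : ∀ (x : V) (c : ℝ), 0 < c →
      sSup {α : ℝ | (c • x) - α • o ∈ D} = c * sSup {α : ℝ | x - α • o ∈ D} := by
    intro x c hc
    refine le_antisymm ?_ ?_
    · refine csSup_le (hne (c • x)) fun α hα => ?_
      have h1 : c⁻¹ • (c • x - α • o) ∈ D := hDsc _ (inv_pos.2 hc) _ hα
      have h2 : c⁻¹ • (c • x - α • o) = x - (α / c) • o := by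
        rw [smul_sub, inv_smul_smul₀ (ne_of_gt hc), smul_smul]
        rw [div_eq_inv_mul]
      rw [h2] at h1
      have := hmem_le x (α / c) h1
      rw [div_le_iff₀ hc] at this
      linarith [this]
    · rw [mul_comm, ← le_div_iff₀ hc]
      refine csSup_le (hne x) fun β hβ => ?_
      rw [le_div_iff₀ hc]
      have h1 : c • (x - β • o) ∈ D := hDsc _ hc _ hβ
      have h2 : c • (x - β • o) = c • x - (β * c) • o := by
        rw [smul_sub, smul_smul, mul_comm]
      rw [h2] at h1
      exact hmem_le _ _ h1
  intro x c
  rcases lt_trichotomy c 0 with hc | hc | hc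
  · have h1 : c • x = (-c) • (-x) := by rw [neg_smul, smul_neg, neg_neg]
    rw [h1, hposhom (-x) (-c) (by linarith), hneg x]
    ring
  · subst hc
    rw [zero_smul, hu0, zero_mul]
  · exact hposhom x c hc
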